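/- Let C be an n×n positive definite covariance matrix and let M_σ(x) = x + N(0, σ²C). For any ε ∈ (0,1] and δ ∈ (0,1/2], if σ² ≥ 2‖diag(C^{-1})‖_∞ log(2/δ)/ε², then M_σ is (ε,δ)-differentially private with respect to neighboring datasets x, x' with ‖x - x'‖₁ ≤ 1 differing in one coordinate by at most 1. -/

import Mathlib

open MeasureTheory ProbabilityTheory Matrix Real
open scoped ENNReal NNReal

/-! ### Auxiliary one-dimensional Gaussian facts -/

lemma gauss_exp_mul_eq (c s : ℝ) :
    Real.exp (c * s) * gaussianPDFReal 0 1 s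
      = (Real.sqrt (2 * Real.pi))⁻¹ * Real.exp (c ^ 2 / 2)
          * Real.exp (-(1/2) * (s - c) ^ 2) := by
  simp only [gaussianPDFReal, NNReal.coe_one, mul_one, sub_zero]
  rw [mul_comm (Real.exp (c * s)), mul_assoc, ← Real.exp_add, mul_assoc, ← Real.exp_add]
  congr 1
  ring

lemma gauss_mgf_integrable (c : ℝ) :
    Integrable (fun s : ℝ => Real.exp (c * s) * gaussianPDFReal 0 1 s) := by
  have h : Integrable (fun s : ℝ => Real.exp (-(1/2) * (s - c) ^ 2)) :=
    (integrable_exp_neg_mul_sq (by norm_num : (0:ℝ) < 1/2)).comp_sub_right c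
  have := (h.const_mul ((Real.sqrt (2 * Real.pi))⁻¹ * Real.exp (c ^ 2 / 2)))
  refine this.congr ?_
  filter_upwards with s
  rw [gauss_exp_mul_eq, mul_assoc]

lemma gauss_mgf (c : ℝ) :
    ∫ s : ℝ, Real.exp (c * s) * gaussianPDFReal 0 1 s = Real.exp (c ^ 2 / 2) := by
  simp_rw [gauss_exp_mul_eq, mul_assoc]
  rw [integral_const_mul, integral_const_mul]
  have h1 : ∫ s : ℝ, Real.exp (-(1/2) * (s - c) ^ 2)
      = ∫ s : ℝ, Real.exp (-(1/2) * s ^ 2) := by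
    exact integral_sub_right_eq_self (fun s => Real.exp (-(1/2) * s ^ 2)) c
  have h2 : Real.sqrt (Real.pi / (1/2)) = Real.sqrt (2 * Real.pi) := by
    norm_num [mul_comm]
  rw [h1, integral_gaussian, h2]
  have h3 : Real.sqrt (2 * Real.pi) ≠ 0 := by positivity
  field_simp

/-! ### The standard Gaussian product measure as a density w.r.t. Lebesgue -/

lemma pi_gaussian_eq_withDensity (n : ℕ) :
    (Measure.pi fun _ : Fin n => gaussianReal 0 1) =
      (volume : Measure (Fin n → ℝ)).withDensity
        (fun z => ∏ j, gaussianPDF 0 1 (z j)) := by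
  refine Measure.pi_eq fun s hs => ?_
  rw [withDensity_apply _ (MeasurableSet.univ_pi hs),
    ← lintegral_indicator (MeasurableSet.univ_pi hs) (fun z => ∏ j, gaussianPDF 0 1 (z j))]
  have hind : (Set.pi Set.univ s).indicator (fun z => ∏ j, gaussianPDF 0 1 (z j))
      = fun z => ∏ j, ENNReal.ofReal ((s j).indicator (gaussianPDFReal 0 1) (z j)) := by
    funext z
    by_cases hz : z ∈ Set.pi Set.univ s
    · rw [Set.indicator_of_mem hz]
      refine Finset.prod_congr rfl fun j _ => ?_
      rw [Set.indicator_of_mem (hz j (Set.mem_univ j))]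
      rfl
    · rw [Set.indicator_of_notMem hz]
      simp only [Set.mem_pi, Set.mem_univ, forall_true_left, not_forall] at hz
      obtain ⟨j, hj⟩ := hz
      exact (Finset.prod_eq_zero (Finset.mem_univ j)
        (by rw [Set.indicator_of_notMem hj]; simp)).symm
  rw [hind]
  have hnn : ∀ z : Fin n → ℝ, 0 ≤ ∏ j, (s j).indicator (gaussianPDFReal 0 1) (z j) :=
    fun z => Finset.prod_nonneg fun j _ =>
      Set.indicator_nonneg (fun t _ => gaussianPDFReal_nonneg 0 1 t) _
  have hint : Integrable (fun z : Fin n → ℝ =>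
      ∏ j, (s j).indicator (gaussianPDFReal 0 1) (z j)) :=
    Integrable.fintype_prod fun j => (integrable_gaussianPDFReal 0 1).indicator (hs j)
  calc ∫⁻ z : Fin n → ℝ, ∏ j, ENNReal.ofReal ((s j).indicator (gaussianPDFReal 0 1) (z j))
      = ∫⁻ z : Fin n → ℝ,
          ENNReal.ofReal (∏ j, (s j).indicator (gaussianPDFReal 0 1) (z j)) := by
        refine lintegral_congr fun z => ?_
        rw [ENNReal.ofReal_prod_of_nonneg fun j _ =>
          Set.indicator_nonneg (fun t _ => gaussianPDFReal_nonneg 0 1 t) _]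
    _ = ENNReal.ofReal (∫ z : Fin n → ℝ,
          ∏ j, (s j).indicator (gaussianPDFReal 0 1) (z j)) :=
        (ofReal_integral_eq_lintegral_ofReal hint (ae_of_all _ hnn)).symm
    _ = ∏ j, gaussianReal 0 1 (s j) := by
        rw [MeasureTheory.integral_fintype_prod_volume_eq_prod
          (f := fun (j : Fin n) (t : ℝ) => (s j).indicator (gaussianPDFReal 0 1) t),
          ENNReal.ofReal_prod_of_nonneg (fun j _ => integral_nonneg
            (Set.indicator_nonneg (fun t _ => gaussianPDFReal_nonneg 0 1 t)))]
        refine Finset.prod_congr rfl fun j _ => ?_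
        rw [integral_indicator (hs j),
          gaussianReal_apply_eq_integral 0 one_ne_zero (s j)]

set_option maxHeartbeats 2000000 in
theorem correlated_gaussian_mechanism_dp (n : ℕ) (C : Matrix (Fin n) (Fin n) ℝ)
    (hC : C.PosDef) (A : Matrix (Fin n) (Fin n) ℝ) (hA : A * A.transpose = C)
    (σ ε δ : ℝ) (hε : 0 < ε ∧ ε ≤ 1) (hδ : 0 < δ ∧ δ ≤ 1/2)
    (hσ : ∀ i : Fin n, 2 * |C⁻¹ i i| * Real.log (2/δ) / ε^2 ≤ σ^2) :
    ∀ x x' : Fin n → ℝ,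
      (∃ i : Fin n, x' = x + Pi.single i 1 ∨ x' = x - Pi.single i 1) →
      ∀ D : Set (Fin n → ℝ), MeasurableSet D →
        Measure.map (fun z => x + σ • A.mulVec z)
            (Measure.pi fun _ : Fin n => gaussianReal 0 1) D ≤
          ENNReal.ofReal (Real.exp ε) *
            Measure.map (fun z => x' + σ • A.mulVec z)
              (Measure.pi fun _ : Fin n => gaussianReal 0 1) D + ENNReal.ofReal δ := by
  obtain ⟨hε0, hε1⟩ := hε
  obtain ⟨hδ0, hδ2⟩ := hδ
  rintro x x' ⟨i, hi⟩ D hD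
  classical
  -- single-vector quadratic form
  have hsingle : (Pi.single i 1 : Fin n → ℝ) ⬝ᵥ C⁻¹ *ᵥ Pi.single i 1 = C⁻¹ i i := by
    simp [dotProduct, Matrix.mulVec, Pi.single_apply, mul_ite, ite_mul,
      Finset.sum_ite_eq, Finset.sum_ite_eq']
  have hL0 : 0 < Real.log (2/δ) := Real.log_pos (by rw [lt_div_iff₀ hδ0]; linarith)
  have hcii : 0 < C⁻¹ i i := by
    have hne : (Pi.single i 1 : Fin n → ℝ) ≠ 0 := by
      intro h; have := congrFun h i; simp at this
    have h := hC.inv.dotProduct_mulVec_pos hne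
    simpa [hsingle] using h
  have hσ2 : 0 < σ^2 := by
    refine lt_of_lt_of_le ?_ (hσ i)
    rw [abs_of_pos hcii]; positivity
  have hσne : σ ≠ 0 := by intro h; rw [h] at hσ2; simp at hσ2
  have hdetA : IsUnit A.det := by
    have hdet : A.det * A.det = C.det := by rw [← hA, Matrix.det_mul, Matrix.det_transpose]
    have hC0 := hC.det_pos
    refine isUnit_iff_ne_zero.mpr fun h => ?_
    rw [h, mul_zero] at hdet; rw [← hdet] at hC0; exact lt_irrefl _ hC0
  -- the difference vector and its preimage
  set v : Fin n → ℝ := x' - x with hv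
  have hx' : x' = x + v := by rw [hv]; abel
  have hvC : v ⬝ᵥ C⁻¹ *ᵥ v = C⁻¹ i i := by
    rcases hi with hi | hi
    · rw [hv, hi]
      have h0 : (x + Pi.single i 1 - x : Fin n → ℝ) = Pi.single i 1 := by abel
      rw [h0]; exact hsingle
    · rw [hv, hi]
      have h0 : (x - Pi.single i 1 - x : Fin n → ℝ) = -(Pi.single i 1) := by abel
      rw [h0, Matrix.mulVec_neg, neg_dotProduct, dotProduct_neg, neg_neg]
      exact hsingle
  set u : Fin n → ℝ := σ⁻¹ • (A⁻¹ *ᵥ v) with hu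
  set w : ℝ := ∑ j, u j ^ 2 with hw
  have hBtB : A⁻¹ᵀ * A⁻¹ = C⁻¹ := by
    rw [← hA, Matrix.mul_inv_rev, Matrix.transpose_nonsing_inv]
  have huu : w = C⁻¹ i i / σ^2 := by
    have h1 : w = u ⬝ᵥ u := by
      rw [hw]; simp [dotProduct, sq]
    have h2 : u ⬝ᵥ u = σ⁻¹ * (σ⁻¹ * ((A⁻¹ *ᵥ v) ⬝ᵥ (A⁻¹ *ᵥ v))) := by
      rw [hu, smul_dotProduct, dotProduct_smul, smul_eq_mul, smul_eq_mul]
    have h3 : v ⬝ᵥ C⁻¹ *ᵥ v = (A⁻¹ *ᵥ v) ⬝ᵥ (A⁻¹ *ᵥ v) := by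
      rw [← hBtB, ← Matrix.mulVec_mulVec, Matrix.dotProduct_mulVec, Matrix.vecMul_transpose]
    rw [h1, h2, ← h3, hvC]
    field_simp [sq]
  have hw_pos : 0 < w := by rw [huu]; exact div_pos hcii hσ2
  have hwL : 2 * w * Real.log (2/δ) ≤ ε ^ 2 := by
    have h := hσ i
    rw [abs_of_pos hcii, div_le_iff₀ (by positivity : (0:ℝ) < ε^2)] at h
    have heq : 2 * (C⁻¹ i i / σ^2) * Real.log (2/δ)
        = (2 * C⁻¹ i i * Real.log (2/δ)) / σ^2 := by ring
    rw [huu, heq, div_le_iff₀ hσ2]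
    linarith [h]
  set L : ℝ := Real.log (2/δ) with hLdef
  have hlog2 : (1:ℝ)/2 ≤ Real.log 2 := by
    have := Real.log_two_gt_d9; linarith
  have hL1 : 1 ≤ L := by
    have h4 : (4:ℝ) ≤ 2/δ := by rw [le_div_iff₀ hδ0]; linarith
    have hmono : Real.log 4 ≤ L := Real.log_le_log (by norm_num) h4
    have hlog4 : Real.log 4 = 2 * Real.log 2 := by
      rw [show (4:ℝ) = 2^2 by norm_num, Real.log_pow]; push_cast; ring
    linarith
  have hwε : w ≤ ε := by nlinarith [hwL, hL1, hε1, hε0, hw_pos]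
  set t : ℝ := (ε - w/2)/w with ht
  have ht0 : 0 ≤ t := div_nonneg (by linarith) hw_pos.le
  have hkey : Real.exp (t*(w/2 - ε) + t^2*w/2) ≤ δ := by
    have hexp : t*(w/2 - ε) + t^2*w/2 = -((ε - w/2)^2/(2*w)) := by
      rw [ht]; field_simp; ring
    rw [hexp, ← Real.exp_log hδ0]
    apply Real.exp_le_exp.mpr
    have hLδ : L = Real.log 2 - Real.log δ := by
      rw [hLdef, Real.log_div (by norm_num) (ne_of_gt hδ0)]
    have hsq : 2*w*(L - ε/2) ≤ (ε - w/2)^2 := by nlinarith [hwL, hw_pos]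
    have hdiv : L - ε/2 ≤ (ε - w/2)^2/(2*w) := by
      rw [le_div_iff₀ (by linarith : (0:ℝ) < 2*w)]; nlinarith [hsq]
    linarith
  -- measure-theoretic setup
  set γ : Measure (Fin n → ℝ) := Measure.pi fun _ : Fin n => gaussianReal 0 1 with hγdef
  set F : (Fin n → ℝ) → ℝ≥0∞ := fun z => ∏ j, gaussianPDF 0 1 (z j) with hF
  have hγ : γ = (volume : Measure (Fin n → ℝ)).withDensity F := pi_gaussian_eq_withDensity n
  have hFmeas : Measurable F := Finset.measurable_prod _ fun j _ =>
    (measurable_gaussianPDF 0 1).comp (measurable_pi_apply j)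
  set Fr : (Fin n → ℝ) → ℝ := fun z => ∏ j, gaussianPDFReal 0 1 (z j) with hFr
  have hFofReal : ∀ z, F z = ENNReal.ofReal (Fr z) := fun z =>
    (ENNReal.ofReal_prod_of_nonneg fun j _ => gaussianPDFReal_nonneg 0 1 (z j)).symm
  have hFrnn : ∀ z, 0 ≤ Fr z := fun z =>
    Finset.prod_nonneg fun j _ => gaussianPDFReal_nonneg 0 1 _
  have hmv : Measurable fun z : Fin n → ℝ => A.mulVec z := by
    refine measurable_pi_lambda _ fun k => ?_
    simpa [Matrix.mulVec, dotProduct] using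
      Finset.measurable_sum Finset.univ fun j _ => (by fun_prop)
  have hf : Measurable fun z : Fin n → ℝ => x + σ • A.mulVec z :=
    measurable_const.add (hmv.const_smul σ)
  have hg : Measurable fun z : Fin n → ℝ => x' + σ • A.mulVec z :=
    measurable_const.add (hmv.const_smul σ)
  have hAu : σ • (A.mulVec u) = v := by
    rw [hu, Matrix.mulVec_smul, Matrix.mulVec_mulVec, Matrix.mul_nonsing_inv _ hdetA,
      Matrix.one_mulVec, smul_smul, mul_inv_cancel₀ hσne, one_smul]
  have hfg : (fun z : Fin n → ℝ => x' + σ • A.mulVec z)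
      = (fun z => x + σ • A.mulVec z) ∘ (fun z => z + u) := by
    funext z
    simp only [Function.comp_apply]
    rw [hx', Matrix.mulVec_add, smul_add, hAu]
    abel
  set S : Set (Fin n → ℝ) := (fun z => x + σ • A.mulVec z) ⁻¹' D with hS
  have hSm : MeasurableSet S := hf hD
  set Lf : (Fin n → ℝ) → ℝ := fun z => w/2 - ∑ j, u j * z j with hLf
  have hLfm : Measurable Lf := by
    apply Measurable.sub measurable_const
    exact Finset.measurable_sum _ fun j _ => (by fun_prop)
  set E : Set (Fin n → ℝ) := {z | Lf z ≤ ε} with hE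
  have hEm : MeasurableSet E := measurableSet_le hLfm measurable_const
  -- density ratio
  have hratio : ∀ z, Fr z = Real.exp (Lf z) * Fr (z - u) := by
    intro z
    have h1 : ∀ j : Fin n, gaussianPDFReal 0 1 (z j)
        = Real.exp (u j^2/2 - u j * z j) * gaussianPDFReal 0 1 (z j - u j) := by
      intro j
      simp only [gaussianPDFReal, NNReal.coe_one, mul_one, sub_zero]
      rw [← mul_assoc, mul_comm (Real.exp _) (Real.sqrt (2*Real.pi))⁻¹, mul_assoc,
        ← Real.exp_add]
      congr 1
      ring
    calc Fr z = ∏ j, (Real.exp (u j^2/2 - u j * z j) * gaussianPDFReal 0 1 (z j - u j)) :=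
        Finset.prod_congr rfl fun j _ => h1 j
      _ = (∏ j, Real.exp (u j^2/2 - u j * z j)) * ∏ j, gaussianPDFReal 0 1 (z j - u j) :=
        Finset.prod_mul_distrib
      _ = Real.exp (Lf z) * Fr (z - u) := by
          rw [← Real.exp_sum]
          congr 1
          · rw [hLf, hw]
            simp only
            rw [Finset.sum_sub_distrib, ← Finset.sum_div]
  have hFbound : ∀ z ∈ E, F z ≤ ENNReal.ofReal (Real.exp ε) * F (z - u) := by
    intro z hz
    have hz' : Lf z ≤ ε := hz
    rw [hFofReal, hFofReal, ← ENNReal.ofReal_mul (Real.exp_nonneg ε)]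
    apply ENNReal.ofReal_le_ofReal
    rw [hratio z]
    exact mul_le_mul_of_nonneg_right (Real.exp_le_exp.mpr hz') (hFrnn _)
  -- translation identity
  have htrans : γ ((fun z => z + u) ⁻¹' S)
      = ∫⁻ z in S, F (z - u) ∂(volume : Measure (Fin n → ℝ)) := by
    rw [hγ, withDensity_apply _ ((measurable_add_const u) hSm),
      ← lintegral_indicator ((measurable_add_const u) hSm) F,
      ← lintegral_indicator hSm]
    have hid : ∀ z, ((fun z => z + u) ⁻¹' S).indicator F z
        = S.indicator (fun y => F (y - u)) (z + u) := by
      intro z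
      by_cases hz : z + u ∈ S
      · rw [Set.indicator_of_mem (show z ∈ (fun z => z + u) ⁻¹' S from hz),
          Set.indicator_of_mem hz, add_sub_cancel_right]
      · rw [Set.indicator_of_notMem
            (show z ∉ (fun z => z + u) ⁻¹' S from fun h => hz h),
          Set.indicator_of_notMem hz]
    calc ∫⁻ z, ((fun z => z + u) ⁻¹' S).indicator F z
        = ∫⁻ z, S.indicator (fun y => F (y - u)) (u + z) := by
          refine lintegral_congr fun z => ?_
          rw [hid z, add_comm]
      _ = ∫⁻ y, S.indicator (fun y => F (y - u)) y :=
          lintegral_add_left_eq_self (S.indicator fun y => F (y - u)) u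
  have claim1 : γ (S ∩ E) ≤ ENNReal.ofReal (Real.exp ε) * γ ((fun z => z + u) ⁻¹' S) := by
    rw [hγ, withDensity_apply _ (hSm.inter hEm), ← hγ]
    calc ∫⁻ z in S ∩ E, F z
        ≤ ∫⁻ z in S ∩ E, ENNReal.ofReal (Real.exp ε) * F (z - u) := by
          refine setLIntegral_mono ((hFmeas.comp (measurable_sub_const u)).const_mul _) ?_
          exact fun z hz => hFbound z hz.2
      _ ≤ ∫⁻ z in S, ENNReal.ofReal (Real.exp ε) * F (z - u) :=
          lintegral_mono_set Set.inter_subset_left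
      _ = ENNReal.ofReal (Real.exp ε) * ∫⁻ z in S, F (z - u) :=
          lintegral_const_mul _ (hFmeas.comp (measurable_sub_const u))
      _ = ENNReal.ofReal (Real.exp ε) * γ ((fun z => z + u) ⁻¹' S) := by rw [htrans]
  -- Chernoff tail bound
  have hptid : ∀ z : Fin n → ℝ, Real.exp (t*(Lf z - ε)) * Fr z
      = Real.exp (t*(w/2 - ε))
          * ∏ j, (Real.exp (-(t * u j) * z j) * gaussianPDFReal 0 1 (z j)) := by
    intro z
    rw [Finset.prod_mul_distrib, ← Real.exp_sum, ← mul_assoc, ← Real.exp_add]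
    have hsum : ∑ j, -(t * u j) * z j = -t * ∑ j, u j * z j := by
      rw [Finset.mul_sum]
      exact Finset.sum_congr rfl fun j _ => by ring
    rw [hsum]
    congr 2
    rw [hLf]
    ring
  have hInt : Integrable (fun z : Fin n → ℝ =>
      ∏ j, (Real.exp (-(t * u j) * z j) * gaussianPDFReal 0 1 (z j))) :=
    Integrable.fintype_prod fun j => gauss_mgf_integrable (-(t * u j))
  have hInt2 : Integrable (fun z : Fin n → ℝ => Real.exp (t*(Lf z - ε)) * Fr z) := by
    refine (hInt.const_mul (Real.exp (t*(w/2 - ε)))).congr ?_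
    filter_upwards with z
    rw [hptid z]
  have hval : ∫ z : Fin n → ℝ, Real.exp (t*(Lf z - ε)) * Fr z
      = Real.exp (t*(w/2 - ε) + t^2 * w/2) := by
    simp_rw [hptid]
    rw [integral_const_mul, MeasureTheory.integral_fintype_prod_volume_eq_prod
      (f := fun (j : Fin n) (s : ℝ) => Real.exp (-(t * u j) * s) * gaussianPDFReal 0 1 s)]
    simp_rw [gauss_mgf]
    rw [← Real.exp_sum, ← Real.exp_add]
    congr 1
    have hsq : ∑ j, (-(t * u j)) ^ 2 / 2 = t^2 * w / 2 := by
      rw [hw, Finset.mul_sum, Finset.sum_div]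
      exact Finset.sum_congr rfl fun j _ => by ring
    rw [hsq]
  have claim2 : γ Eᶜ ≤ ENNReal.ofReal δ := by
    rw [hγ, withDensity_apply _ hEm.compl]
    have hpt : ∀ z ∈ Eᶜ, F z ≤ ENNReal.ofReal (Real.exp (t * (Lf z - ε)) * Fr z) := by
      intro z hz
      have hz' : ε < Lf z := lt_of_not_ge hz
      rw [hFofReal]
      apply ENNReal.ofReal_le_ofReal
      have h1 : (1:ℝ) ≤ Real.exp (t * (Lf z - ε)) :=
        Real.one_le_exp (mul_nonneg ht0 (by linarith))
      nlinarith [hFrnn z]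
    calc ∫⁻ z in Eᶜ, F z ∂(volume : Measure (Fin n → ℝ))
        ≤ ∫⁻ z, ENNReal.ofReal (Real.exp (t*(Lf z - ε)) * Fr z)
            ∂(volume : Measure (Fin n → ℝ)) := by
          rw [← lintegral_indicator hEm.compl]
          refine lintegral_mono fun z => ?_
          by_cases hz : z ∈ Eᶜ
          · rw [Set.indicator_of_mem hz]; exact hpt z hz
          · rw [Set.indicator_of_notMem hz]; exact zero_le
      _ = ENNReal.ofReal (∫ z : Fin n → ℝ, Real.exp (t*(Lf z - ε)) * Fr z) :=
          (ofReal_integral_eq_lintegral_ofReal hInt2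
            (ae_of_all _ fun z => mul_nonneg (Real.exp_nonneg _) (hFrnn z))).symm
      _ ≤ ENNReal.ofReal δ := by
          apply ENNReal.ofReal_le_ofReal
          rw [hval]; exact hkey
  -- assembling
  have hmapf : Measure.map (fun z => x + σ • A.mulVec z) γ D = γ S :=
    Measure.map_apply hf hD
  have hmapg : Measure.map (fun z => x' + σ • A.mulVec z) γ D
      = γ ((fun z => z + u) ⁻¹' S) := by
    rw [Measure.map_apply hg hD, hfg]
    rfl
  rw [hmapf, hmapg]
  calc γ S ≤ γ ((S ∩ E) ∪ Eᶜ) := by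
        refine measure_mono fun z hz => ?_
        by_cases h : z ∈ E
        exacts [Or.inl ⟨hz, h⟩, Or.inr h]
    _ ≤ γ (S ∩ E) + γ Eᶜ := measure_union_le _ _
    _ ≤ ENNReal.ofReal (Real.exp ε) * γ ((fun z => z + u) ⁻¹' S) + ENNReal.ofReal δ :=
        add_le_add claim1 claim2
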